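/- Let δ > 0, γ ≥ 0, γ' > 1/δ with 2/δ < γ + γ' < 1, and for n > 1 set I(n) = ∫_{1/n}^1 ∫_{1/n}^1 min(1, (min(s,t))^{−γδ} (max(s,t))^{−γ'δ} n^{−δ}) ds dt. Then lim_{n→∞} (−log I(n) / log n) = δ + 2 − δ(γ + γ'). -/

import Mathlib

open Filter MeasureTheory Real Set

namespace DeffAux

/-- The integrand. -/
noncomputable def fI (γ γ' δ n s t : ℝ) : ℝ :=
  min 1 ((min s t) ^ (-(γ * δ)) * (max s t) ^ (-(γ' * δ)) * n ^ (-δ))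

lemma one_div_rpow_eq {n : ℝ} (hn0 : 0 < n) (c : ℝ) : (1/n) ^ c = n ^ (-c) := by
  rw [one_div, Real.inv_rpow hn0.le, ← Real.rpow_neg hn0.le]

lemma key_pointwise {δ γ γ' : ℝ} (hδ : 0 < δ) (hγ' : 1 / δ < γ')
    (hsum_lower : 2 / δ < γ + γ') {n s t : ℝ} (hn : 1 ≤ n)
    (hs : s ∈ Icc (1/n) 1) (ht : t ∈ Icc (1/n) 1) :
    fI γ γ' δ n s t ≤ n ^ (-(δ + 2 - δ * (γ + γ'))) * (s⁻¹ * t⁻¹) := by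
  have hn0 : (0:ℝ) < n := lt_of_lt_of_le one_pos hn
  have ha0 : (0:ℝ) < 1/n := by positivity
  unfold fI
  set u := min s t with hu
  set v := max s t with hv
  have hau : 1/n ≤ u := le_min hs.1 ht.1
  have hu0 : 0 < u := lt_of_lt_of_le ha0 hau
  have huv : u ≤ v := min_le_max
  have hv0 : 0 < v := lt_of_lt_of_le hu0 huv
  have hav : 1/n ≤ v := le_trans hau huv
  have hγ'δ : 1 < γ' * δ := by
    rw [div_lt_iff₀ hδ] at hγ'; linarith
  have hβ : 0 < (γ + γ') * δ - 2 := by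
    rw [div_lt_iff₀ hδ] at hsum_lower; linarith
  refine le_trans (min_le_right _ _) ?_
  have key : u ^ (1 - γ * δ) * v ^ (1 - γ' * δ) ≤ n ^ ((γ + γ') * δ - 2) := by
    have hvb : v ^ (1 - γ' * δ) ≤ n ^ (γ' * δ - 1) := by
      calc v ^ (1 - γ' * δ) ≤ (1/n) ^ (1 - γ' * δ) :=
            Real.rpow_le_rpow_of_nonpos ha0 hav (by linarith)
        _ = n ^ (γ' * δ - 1) := by rw [one_div_rpow_eq hn0]; congr 1; ring
    rcases le_or_gt 1 (γ * δ) with hc | hc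
    · have hub : u ^ (1 - γ * δ) ≤ n ^ (γ * δ - 1) := by
        calc u ^ (1 - γ * δ) ≤ (1/n) ^ (1 - γ * δ) :=
              Real.rpow_le_rpow_of_nonpos ha0 hau (by linarith)
          _ = n ^ (γ * δ - 1) := by rw [one_div_rpow_eq hn0]; congr 1; ring
      calc u ^ (1 - γ * δ) * v ^ (1 - γ' * δ)
          ≤ n ^ (γ * δ - 1) * n ^ (γ' * δ - 1) :=
            mul_le_mul hub hvb (Real.rpow_nonneg hv0.le _) (Real.rpow_nonneg hn0.le _)
        _ = n ^ ((γ + γ') * δ - 2) := by rw [← Real.rpow_add hn0]; congr 1; ring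
    · have hub : u ^ (1 - γ * δ) ≤ v ^ (1 - γ * δ) :=
        Real.rpow_le_rpow hu0.le huv (by linarith)
      calc u ^ (1 - γ * δ) * v ^ (1 - γ' * δ)
          ≤ v ^ (1 - γ * δ) * v ^ (1 - γ' * δ) :=
            mul_le_mul_of_nonneg_right hub (Real.rpow_nonneg hv0.le _)
        _ = v ^ (2 - (γ + γ') * δ) := by rw [← Real.rpow_add hv0]; congr 1; ring
        _ ≤ (1/n) ^ (2 - (γ + γ') * δ) :=
            Real.rpow_le_rpow_of_nonpos ha0 hav (by linarith)
        _ = n ^ ((γ + γ') * δ - 2) := by rw [one_div_rpow_eq hn0]; congr 1; ring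
  have hst : s⁻¹ * t⁻¹ = u⁻¹ * v⁻¹ := by
    rw [← mul_inv, ← mul_inv, min_mul_max]
  have hue : u ^ (-(γ * δ)) = u ^ (1 - γ * δ) * u⁻¹ := by
    rw [← Real.rpow_neg_one u, ← Real.rpow_add hu0]; congr 1; ring
  have hve : v ^ (-(γ' * δ)) = v ^ (1 - γ' * δ) * v⁻¹ := by
    rw [← Real.rpow_neg_one v, ← Real.rpow_add hv0]; congr 1; ring
  calc u ^ (-(γ * δ)) * v ^ (-(γ' * δ)) * n ^ (-δ)
      = (u ^ (1 - γ * δ) * v ^ (1 - γ' * δ)) * (n ^ (-δ) * (u⁻¹ * v⁻¹)) := by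
        rw [hue, hve]; ring
    _ ≤ n ^ ((γ + γ') * δ - 2) * (n ^ (-δ) * (u⁻¹ * v⁻¹)) := by
        apply mul_le_mul_of_nonneg_right key
        have h1 : (0:ℝ) ≤ n ^ (-δ) := Real.rpow_nonneg hn0.le _
        positivity
    _ = n ^ (-(δ + 2 - δ * (γ + γ'))) * (s⁻¹ * t⁻¹) := by
        rw [hst, ← mul_assoc, ← Real.rpow_add hn0]
        congr 2
        ring

lemma log_integral {n : ℝ} (hn : 2 ≤ n) :
    ∫ t in Icc (1/n) 1, t⁻¹ = Real.log n := by
  have hn0 : (0:ℝ) < n := by linarith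
  have ha0 : (0:ℝ) < 1/n := by positivity
  have ha1 : 1/n ≤ 1 := by rw [div_le_one hn0]; linarith
  have h0 : (0:ℝ) ∉ Set.uIcc (1/n) 1 := by
    rw [Set.uIcc_of_le ha1]
    simp only [Set.mem_Icc, not_and_or, not_le]
    left; exact ha0
  rw [MeasureTheory.integral_Icc_eq_integral_Ioc, ← intervalIntegral.integral_of_le ha1,
    integral_inv h0, one_div_one_div]

lemma I_bounds {δ γ γ' : ℝ} (hδ : 0 < δ) (hγ0 : 0 ≤ γ) (hγ' : 1 / δ < γ')
    (hsum_lower : 2 / δ < γ + γ') (hsum : γ + γ' < 1) {n : ℝ} (hn : 2 ≤ n) :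
    (2:ℝ) ^ (-(γ * δ)) * 2 ^ (-(γ' * δ)) * n ^ (-(δ + 2 - δ * (γ + γ'))) ≤
      (∫ s in Icc (1/n) 1, ∫ t in Icc (1/n) 1, fI γ γ' δ n s t) ∧
    (∫ s in Icc (1/n) 1, ∫ t in Icc (1/n) 1, fI γ γ' δ n s t)
      ≤ n ^ (-(δ + 2 - δ * (γ + γ'))) * (Real.log n * Real.log n) := by
  have hn0 : (0:ℝ) < n := by linarith
  have hn1 : (1:ℝ) ≤ n := by linarith
  have ha0 : (0:ℝ) < 1/n := by positivity
  have ha1 : 1/n ≤ 1 := by rw [div_le_one hn0]; linarith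
  have hb1 : 2/n ≤ 1 := by rw [div_le_one hn0]; linarith
  have hab : 1/n ≤ 2/n := by rw [div_le_div_iff₀ hn0 hn0]; nlinarith
  have hγδ0 : 0 ≤ γ * δ := mul_nonneg hγ0 hδ.le
  have hγ'δ : 1 < γ' * δ := by rw [div_lt_iff₀ hδ] at hγ'; linarith
  have hS : MeasurableSet (Icc (1/n) (1:ℝ)) := measurableSet_Icc
  have hT : MeasurableSet (Icc (1/n) (2/n)) := measurableSet_Icc
  have hTS : Icc (1/n) (2/n) ⊆ Icc (1/n) 1 := Icc_subset_Icc le_rfl hb1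
  -- basic pointwise facts
  have hf_nonneg : ∀ s ∈ Icc (1/n) (1:ℝ), ∀ t ∈ Icc (1/n) (1:ℝ), 0 ≤ fI γ γ' δ n s t := by
    intro s hs t ht
    have h1 : 0 < min s t := lt_of_lt_of_le ha0 (le_min hs.1 ht.1)
    have h2 : 0 < max s t := lt_of_lt_of_le h1 min_le_max
    refine le_min zero_le_one ?_
    have e1 : (0:ℝ) ≤ (min s t) ^ (-(γ * δ)) := Real.rpow_nonneg h1.le _
    have e2 : (0:ℝ) ≤ (max s t) ^ (-(γ' * δ)) := Real.rpow_nonneg h2.le _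
    have e3 : (0:ℝ) ≤ n ^ (-δ) := Real.rpow_nonneg hn0.le _
    positivity
  have hf_le_one : ∀ s t : ℝ, fI γ γ' δ n s t ≤ 1 := fun s t => min_le_left _ _
  have hf_meas : ∀ s, Measurable (fun t => fI γ γ' δ n s t) := by
    intro s
    unfold fI
    exact measurable_const.min ((((measurable_const.min measurable_id).pow
      measurable_const).mul ((measurable_const.max measurable_id).pow
      measurable_const)).mul measurable_const)
  have hf_int : ∀ s ∈ Icc (1/n) (1:ℝ),
      IntegrableOn (fun t => fI γ γ' δ n s t) (Icc (1/n) 1) := by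
    intro s hs
    apply Measure.integrableOn_of_bounded (M := 1) measure_Icc_lt_top.ne
      (hf_meas s).aestronglyMeasurable
    refine (ae_restrict_of_forall_mem hS) fun t ht => ?_
    rw [Real.norm_eq_abs, abs_of_nonneg (hf_nonneg s hs t ht)]
    exact hf_le_one s t
  -- measurability of the inner-integral function
  have hf2 : Measurable fun p : ℝ × ℝ => fI γ γ' δ n p.1 p.2 := by
    unfold fI
    exact measurable_const.min ((((measurable_fst.min measurable_snd).pow
      measurable_const).mul ((measurable_fst.max measurable_snd).pow
      measurable_const)).mul measurable_const)
  have hF_meas : StronglyMeasurable fun s => ∫ t in Icc (1/n) (1:ℝ), fI γ γ' δ n s t :=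
    hf2.stronglyMeasurable.integral_prod_right'
  have hF_nonneg : ∀ s ∈ Icc (1/n) (1:ℝ), 0 ≤ ∫ t in Icc (1/n) (1:ℝ), fI γ γ' δ n s t :=
    fun s hs => setIntegral_nonneg hS fun t ht => hf_nonneg s hs t ht
  -- pointwise upper bound for the inner integral
  have hFs_le : ∀ s ∈ Icc (1/n) (1:ℝ),
      (∫ t in Icc (1/n) (1:ℝ), fI γ γ' δ n s t)
        ≤ (n ^ (-(δ + 2 - δ * (γ + γ'))) * Real.log n) * s⁻¹ := by
    intro s hs
    have hs0 : 0 < s := lt_of_lt_of_le ha0 hs.1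
    have hg_int : IntegrableOn
        (fun t : ℝ => n ^ (-(δ + 2 - δ * (γ + γ'))) * (s⁻¹ * t⁻¹)) (Icc (1/n) 1) := by
      apply ContinuousOn.integrableOn_Icc
      apply continuousOn_const.mul
      apply continuousOn_const.mul
      exact ContinuousOn.inv₀ continuousOn_id fun t ht => (lt_of_lt_of_le ha0 ht.1).ne'
    have hmono := integral_mono_of_nonneg (μ := volume.restrict (Icc (1/n) 1))
      (f := fun t => fI γ γ' δ n s t)
      (g := fun t => n ^ (-(δ + 2 - δ * (γ + γ'))) * (s⁻¹ * t⁻¹))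
      ((ae_restrict_of_forall_mem hS) fun t ht => hf_nonneg s hs t ht)
      hg_int
      ((ae_restrict_of_forall_mem hS) fun t ht => key_pointwise hδ hγ' hsum_lower hn1 hs ht)
    calc (∫ t in Icc (1/n) (1:ℝ), fI γ γ' δ n s t)
        ≤ ∫ t in Icc (1/n) (1:ℝ), n ^ (-(δ + 2 - δ * (γ + γ'))) * (s⁻¹ * t⁻¹) := hmono
      _ = n ^ (-(δ + 2 - δ * (γ + γ'))) * (s⁻¹ * ∫ t in Icc (1/n) (1:ℝ), t⁻¹) := by
          rw [integral_const_mul, integral_const_mul]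
      _ = (n ^ (-(δ + 2 - δ * (γ + γ'))) * Real.log n) * s⁻¹ := by
          rw [log_integral hn]; ring
  -- integrability of the inner-integral function
  have hF_int : IntegrableOn (fun s => ∫ t in Icc (1/n) (1:ℝ), fI γ γ' δ n s t)
      (Icc (1/n) 1) := by
    apply Measure.integrableOn_of_bounded
      (M := (n ^ (-(δ + 2 - δ * (γ + γ'))) * Real.log n) * n) measure_Icc_lt_top.ne
      hF_meas.aestronglyMeasurable
    refine (ae_restrict_of_forall_mem hS) fun s hs => ?_
    rw [Real.norm_eq_abs, abs_of_nonneg (hF_nonneg s hs)]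
    refine le_trans (hFs_le s hs) ?_
    have hs0 : 0 < s := lt_of_lt_of_le ha0 hs.1
    have hsn : s⁻¹ ≤ n := by
      rw [← one_div]; exact (one_div_le hs0 hn0).mpr hs.1
    have hc0 : 0 ≤ n ^ (-(δ + 2 - δ * (γ + γ'))) * Real.log n :=
      mul_nonneg (Real.rpow_nonneg hn0.le _) (Real.log_nonneg hn1)
    exact mul_le_mul_of_nonneg_left hsn hc0
  -- upper bound
  have hupper : (∫ s in Icc (1/n) (1:ℝ), ∫ t in Icc (1/n) (1:ℝ), fI γ γ' δ n s t)
      ≤ n ^ (-(δ + 2 - δ * (γ + γ'))) * (Real.log n * Real.log n) := by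
    have hg_int : IntegrableOn
        (fun s : ℝ => (n ^ (-(δ + 2 - δ * (γ + γ'))) * Real.log n) * s⁻¹) (Icc (1/n) 1) := by
      apply ContinuousOn.integrableOn_Icc
      apply continuousOn_const.mul
      exact ContinuousOn.inv₀ continuousOn_id fun s hs => (lt_of_lt_of_le ha0 hs.1).ne'
    have hmono := integral_mono_of_nonneg (μ := volume.restrict (Icc (1/n) 1))
      (f := fun s => ∫ t in Icc (1/n) (1:ℝ), fI γ γ' δ n s t)
      (g := fun s => (n ^ (-(δ + 2 - δ * (γ + γ'))) * Real.log n) * s⁻¹)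
      ((ae_restrict_of_forall_mem hS) fun s hs => hF_nonneg s hs)
      hg_int
      ((ae_restrict_of_forall_mem hS) fun s hs => hFs_le s hs)
    calc (∫ s in Icc (1/n) (1:ℝ), ∫ t in Icc (1/n) (1:ℝ), fI γ γ' δ n s t)
        ≤ ∫ s in Icc (1/n) (1:ℝ), (n ^ (-(δ + 2 - δ * (γ + γ'))) * Real.log n) * s⁻¹ := hmono
      _ = (n ^ (-(δ + 2 - δ * (γ + γ'))) * Real.log n) * ∫ s in Icc (1/n) (1:ℝ), s⁻¹ := by
          rw [integral_const_mul]
      _ = n ^ (-(δ + 2 - δ * (γ + γ'))) * (Real.log n * Real.log n) := by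
          rw [log_integral hn]; ring
  -- lower bound
  have hμT : (volume (Icc (1/n) (2/n))).toReal = 1/n := by
    rw [Real.volume_Icc, ENNReal.toReal_ofReal (by linarith : (0:ℝ) ≤ 2/n - 1/n)]
    ring
  have h2n : ∀ c : ℝ, (2/n : ℝ) ^ (-c) = 2 ^ (-c) * n ^ c := by
    intro c
    rw [Real.div_rpow two_pos.le hn0.le, div_eq_mul_inv, Real.rpow_neg hn0.le, inv_inv]
  have hm'X : ∀ s ∈ Icc (1/n) (2/n), ∀ t ∈ Icc (1/n) (2/n),
      2 ^ (-(γ * δ)) * 2 ^ (-(γ' * δ)) * n ^ (γ * δ + γ' * δ - δ) ≤ fI γ γ' δ n s t := by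
    intro s hs t ht
    have hu0 : 0 < min s t := lt_of_lt_of_le ha0 (le_min hs.1 ht.1)
    have hv0 : 0 < max s t := lt_of_lt_of_le hu0 min_le_max
    have hub : min s t ≤ 2/n := le_trans (min_le_left _ _) hs.2
    have hvb : max s t ≤ 2/n := max_le hs.2 ht.2
    have e1 : (2/n : ℝ) ^ (-(γ * δ)) ≤ (min s t) ^ (-(γ * δ)) :=
      Real.rpow_le_rpow_of_nonpos hu0 hub (by linarith)
    have e2 : (2/n : ℝ) ^ (-(γ' * δ)) ≤ (max s t) ^ (-(γ' * δ)) :=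
      Real.rpow_le_rpow_of_nonpos hv0 hvb (by linarith)
    have e3 : (2/n : ℝ) ^ (-(γ * δ)) * (2/n) ^ (-(γ' * δ)) * n ^ (-δ)
        ≤ (min s t) ^ (-(γ * δ)) * (max s t) ^ (-(γ' * δ)) * n ^ (-δ) := by
      apply mul_le_mul_of_nonneg_right _ (Real.rpow_nonneg hn0.le _)
      exact mul_le_mul e1 e2 (Real.rpow_nonneg (by positivity) _) (Real.rpow_nonneg hu0.le _)
    have heq : 2 ^ (-(γ * δ)) * 2 ^ (-(γ' * δ)) * n ^ (γ * δ + γ' * δ - δ)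
        = (2/n : ℝ) ^ (-(γ * δ)) * (2/n) ^ (-(γ' * δ)) * n ^ (-δ) := by
      rw [h2n, h2n, show n ^ (γ * δ + γ' * δ - δ) = n ^ (γ * δ) * n ^ (γ' * δ) * n ^ (-δ) by
        rw [show γ * δ + γ' * δ - δ = γ * δ + γ' * δ + -δ from by ring,
          ← Real.rpow_add hn0, ← Real.rpow_add hn0]]
      ring
    have hm'1 : 2 ^ (-(γ * δ)) * 2 ^ (-(γ' * δ)) * n ^ (γ * δ + γ' * δ - δ) ≤ 1 := by
      have b1 : (2:ℝ) ^ (-(γ * δ)) ≤ 1 :=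
        Real.rpow_le_one_of_one_le_of_nonpos one_le_two (by linarith)
      have b2 : (2:ℝ) ^ (-(γ' * δ)) ≤ 1 :=
        Real.rpow_le_one_of_one_le_of_nonpos one_le_two (by linarith)
      have b3 : n ^ (γ * δ + γ' * δ - δ) ≤ 1 := by
        apply Real.rpow_le_one_of_one_le_of_nonpos hn1
        nlinarith
      have b12 : (2:ℝ) ^ (-(γ * δ)) * 2 ^ (-(γ' * δ)) ≤ 1 :=
        mul_le_one₀ b1 (Real.rpow_nonneg two_pos.le _) b2
      calc 2 ^ (-(γ * δ)) * 2 ^ (-(γ' * δ)) * n ^ (γ * δ + γ' * δ - δ)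
          ≤ 1 * 1 := mul_le_mul b12 b3 (Real.rpow_nonneg hn0.le _) zero_le_one
        _ = 1 := mul_one 1
    exact le_min hm'1 (heq ▸ e3)
  have hInner_lower : ∀ s ∈ Icc (1/n) (2/n),
      (2 ^ (-(γ * δ)) * 2 ^ (-(γ' * δ)) * n ^ (γ * δ + γ' * δ - δ)) * (1/n)
        ≤ ∫ t in Icc (1/n) (1:ℝ), fI γ γ' δ n s t := by
    intro s hs
    have h1 := setIntegral_ge_of_const_le (μ := volume) hT measure_Icc_lt_top.ne
      (fun t ht => hm'X s hs t ht) ((hf_int s (hTS hs)).mono_set hTS)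
    have h2 : (∫ t in Icc (1/n) (2/n), fI γ γ' δ n s t)
        ≤ ∫ t in Icc (1/n) (1:ℝ), fI γ γ' δ n s t :=
      setIntegral_mono_set (hf_int s (hTS hs))
        ((ae_restrict_of_forall_mem hS) fun t ht => hf_nonneg s (hTS hs) t ht)
        (HasSubset.Subset.eventuallyLE hTS)
    rw [measureReal_def, hμT, smul_eq_mul, mul_comm (1/n)] at h1
    linarith
  have hlower : (2:ℝ) ^ (-(γ * δ)) * 2 ^ (-(γ' * δ)) * n ^ (-(δ + 2 - δ * (γ + γ')))
      ≤ ∫ s in Icc (1/n) (1:ℝ), ∫ t in Icc (1/n) (1:ℝ), fI γ γ' δ n s t := by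
    have h1 := setIntegral_ge_of_const_le (μ := volume) hT measure_Icc_lt_top.ne
      (fun s hs => hInner_lower s hs) (hF_int.mono_set hTS)
    have h2 : (∫ s in Icc (1/n) (2/n), ∫ t in Icc (1/n) (1:ℝ), fI γ γ' δ n s t)
        ≤ ∫ s in Icc (1/n) (1:ℝ), ∫ t in Icc (1/n) (1:ℝ), fI γ γ' δ n s t :=
      setIntegral_mono_set hF_int
        ((ae_restrict_of_forall_mem hS) fun s hs => hF_nonneg s hs)
        (HasSubset.Subset.eventuallyLE hTS)
    rw [measureReal_def, hμT, smul_eq_mul, mul_comm (1/n)] at h1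
    have heqc : (2:ℝ) ^ (-(γ * δ)) * 2 ^ (-(γ' * δ)) * n ^ (-(δ + 2 - δ * (γ + γ')))
        = ((2 ^ (-(γ * δ)) * 2 ^ (-(γ' * δ)) * n ^ (γ * δ + γ' * δ - δ)) * (1/n)) * (1/n) := by
      rw [show (1:ℝ)/n = n ^ (-(1:ℝ)) by rw [Real.rpow_neg_one, one_div]]
      rw [show n ^ (-(δ + 2 - δ * (γ + γ')))
          = n ^ (γ * δ + γ' * δ - δ) * n ^ (-(1:ℝ)) * n ^ (-(1:ℝ)) by
        rw [← Real.rpow_add hn0, ← Real.rpow_add hn0]; congr 1; ring]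
      ring
    rw [heqc]
    exact le_trans h1 h2
  exact ⟨hlower, hupper⟩

end DeffAux

open DeffAux

/-- Effective decay exponent of the weight-dependent random connection model with
interpolation kernel and long-range profile: in the regime `γ' > 1/δ`,
`2/δ < γ + γ' < 1`, one has `δ_eff = δ + 2 - δ(γ + γ')`, i.e.
`-log I(n) / log n → δ + 2 - δ(γ + γ')` for
`I(n) = ∫∫_{[1/n,1]²} min(1, (s∧t)^(-γδ)(s∨t)^(-γ'δ) n^(-δ)) ds dt`. -/
theorem deff_kernel_large_gamma' (δ γ γ' : ℝ) (hδ : 0 < δ)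
    (hγ0 : 0 ≤ γ) (hγ' : 1 / δ < γ') (hsum_lower : 2 / δ < γ + γ')
    (hsum : γ + γ' < 1) :
    Tendsto (fun n : ℝ =>
      -Real.log (∫ s in Set.Icc (1 / n) 1, ∫ t in Set.Icc (1 / n) 1,
          min 1 ((min s t) ^ (-(γ * δ)) * (max s t) ^ (-(γ' * δ)) * n ^ (-δ)))
        / Real.log n) atTop (nhds (δ + 2 - δ * (γ + γ'))) := by
  show Tendsto (fun n : ℝ =>
      -Real.log (∫ s in Set.Icc (1 / n) 1, ∫ t in Set.Icc (1 / n) 1, fI γ γ' δ n s t)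
        / Real.log n) atTop (nhds (δ + 2 - δ * (γ + γ')))
  have hc₀pos : (0:ℝ) < 2 ^ (-(γ * δ)) * 2 ^ (-(γ' * δ)) := by positivity
  apply tendsto_of_tendsto_of_tendsto_of_le_of_le'
    (g := fun n : ℝ => (δ + 2 - δ * (γ + γ')) - 2 * Real.log (Real.log n) / Real.log n)
    (h := fun n : ℝ => (δ + 2 - δ * (γ + γ'))
      - Real.log (2 ^ (-(γ * δ)) * 2 ^ (-(γ' * δ))) / Real.log n)
  · have h1 : Tendsto (fun n : ℝ => Real.log (Real.log n) / Real.log n) atTop (nhds 0) :=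
      Real.isLittleO_log_id_atTop.tendsto_div_nhds_zero.comp Real.tendsto_log_atTop
    have h2 := tendsto_const_nhds (x := (δ + 2 - δ * (γ + γ'))) (f := atTop (α := ℝ))
    have := h2.sub (h1.const_mul 2)
    simpa [mul_div_assoc] using this
  · have h1 : Tendsto (fun n : ℝ =>
        Real.log (2 ^ (-(γ * δ)) * 2 ^ (-(γ' * δ))) / Real.log n) atTop (nhds 0) :=
      tendsto_const_nhds.div_atTop Real.tendsto_log_atTop
    have h2 := tendsto_const_nhds (x := (δ + 2 - δ * (γ + γ'))) (f := atTop (α := ℝ))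
    simpa using h2.sub h1
  · filter_upwards [eventually_ge_atTop (2:ℝ)] with n hn
    have hn0 : (0:ℝ) < n := by linarith
    have hlogn : 0 < Real.log n := Real.log_pos (by linarith)
    obtain ⟨hlow, hup⟩ := I_bounds hδ hγ0 hγ' hsum_lower hsum hn
    have hIpos : 0 < ∫ s in Set.Icc (1/n) 1, ∫ t in Set.Icc (1/n) 1, fI γ γ' δ n s t := by
      refine lt_of_lt_of_le ?_ hlow
      have := Real.rpow_pos_of_pos hn0 (-(δ + 2 - δ * (γ + γ')))
      positivity
    have h2 : Real.log (∫ s in Set.Icc (1/n) 1, ∫ t in Set.Icc (1/n) 1, fI γ γ' δ n s t)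
        ≤ Real.log (n ^ (-(δ + 2 - δ * (γ + γ'))) * (Real.log n * Real.log n)) :=
      Real.log_le_log hIpos hup
    rw [Real.log_mul (Real.rpow_pos_of_pos hn0 _).ne' (by positivity),
      Real.log_mul hlogn.ne' hlogn.ne', Real.log_rpow hn0] at h2
    have h3 : δ + 2 - δ * (γ + γ') - 2 * Real.log (Real.log n) / Real.log n
        = ((δ + 2 - δ * (γ + γ')) * Real.log n - 2 * Real.log (Real.log n)) / Real.log n := by
      field_simp
    rw [h3]
    exact (div_le_div_iff_of_pos_right hlogn).mpr (by linarith)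
  · filter_upwards [eventually_ge_atTop (2:ℝ)] with n hn
    have hn0 : (0:ℝ) < n := by linarith
    have hlogn : 0 < Real.log n := Real.log_pos (by linarith)
    obtain ⟨hlow, hup⟩ := I_bounds hδ hγ0 hγ' hsum_lower hsum hn
    have hrp : 0 < n ^ (-(δ + 2 - δ * (γ + γ'))) :=
      Real.rpow_pos_of_pos hn0 _
    have hIpos : 0 < ∫ s in Set.Icc (1/n) 1, ∫ t in Set.Icc (1/n) 1, fI γ γ' δ n s t := by
      refine lt_of_lt_of_le ?_ hlow
      positivity
    have h1 : Real.log (2 ^ (-(γ * δ)) * 2 ^ (-(γ' * δ)) * n ^ (-(δ + 2 - δ * (γ + γ'))))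
        ≤ Real.log (∫ s in Set.Icc (1/n) 1, ∫ t in Set.Icc (1/n) 1, fI γ γ' δ n s t) :=
      Real.log_le_log (by positivity) hlow
    rw [Real.log_mul hc₀pos.ne' hrp.ne', Real.log_rpow hn0] at h1
    have h3 : δ + 2 - δ * (γ + γ')
          - Real.log (2 ^ (-(γ * δ)) * 2 ^ (-(γ' * δ))) / Real.log n
        = ((δ + 2 - δ * (γ + γ')) * Real.log n
          - Real.log (2 ^ (-(γ * δ)) * 2 ^ (-(γ' * δ)))) / Real.log n := by
      field_simp
    rw [h3]
    exact (div_le_div_iff_of_pos_right hlogn).mpr (by linarith)
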